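/- Let m ∈ ℕ and let h_k denote the coefficient of x^k in the m-th probabilist Hermite polynomial He_m (which satisfies He_m''(x) − x·He_m'(x) + m·He_m(x) = 0), with h_k = 0 for k > m. Define z(n) = Σ_{k=0}^{n} h_k · n!/(n−k)!. Then for every n ∈ ℕ: z(n+2) − 2·z(n+1) + z(n) − Σ_{k=0}^{n} Σ_{j=0}^{k−1} (−1)^{k−1−j} · (n! / (j! · (k−1−j)! · (n−k)!)) · (z(j+1) − z(j)) + m·z(n) = 0. -/

import Mathlib

open Finset Polynomial

-- Hermite coefficient recurrence in ℤ
lemma hermite_rec (m : ℕ) : ∀ k : ℕ,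
    ((k:ℤ)+2)*((k:ℤ)+1) * (hermite m).coeff (k+2) + ((m:ℤ) - (k:ℤ)) * (hermite m).coeff k = 0 := by
  induction m with
  | zero =>
    intro k
    cases k with
    | zero => simp [hermite_zero, coeff_one]
    | succ k => simp [hermite_zero, coeff_one]
  | succ m ih =>
    intro k
    cases k with
    | zero =>
      have h1 := ih 1
      rw [show (0:ℕ)+2 = 1+1 by rfl, coeff_hermite_succ_succ m 1, coeff_hermite_succ_zero]
      push_cast at h1 ⊢
      linear_combination -h1
    | succ k =>
      have h0 := ih k
      have h2 := ih (k+2)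
      rw [show k+1+2 = (k+2)+1 by ring, coeff_hermite_succ_succ m (k+2),
        coeff_hermite_succ_succ m k]
      push_cast at h0 h2 ⊢
      linear_combination h0 - ((k:ℤ)+2) * h2

lemma hermite_recR (m k : ℕ) :
    ((k:ℝ)+2)*((k:ℝ)+1) * ((hermite m).coeff (k+2) : ℝ)
      + ((m:ℝ) - (k:ℝ)) * ((hermite m).coeff k : ℝ) = 0 := by
  exact_mod_cast congrArg (fun x : ℤ => (x : ℝ)) (hermite_rec m k)

lemma descF_add (n k : ℕ) :
    (n+1).descFactorial (k+1) = n.descFactorial (k+1) + (k+1) * n.descFactorial k := by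
  rw [Nat.succ_descFactorial_succ, Nat.descFactorial_succ]
  rcases le_or_gt k n with hk | hk
  · rw [← Nat.add_mul]
    congr 1
    omega
  · rw [Nat.descFactorial_eq_zero_iff_lt.2 hk]
    simp

lemma Zdiff (c : ℕ → ℝ) (n : ℕ) :
    (∑ k ∈ range (n+2), c k * ((n+1).descFactorial k : ℝ))
      - ∑ k ∈ range (n+1), c k * (n.descFactorial k : ℝ)
    = ∑ k ∈ range (n+1), ((k:ℝ)+1) * c (k+1) * (n.descFactorial k : ℝ) := by
  rw [Finset.sum_range_succ' (fun k => c k * ((n+1).descFactorial k : ℝ)) (n+1),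
    Finset.sum_range_succ' (fun k => c k * ((n).descFactorial k : ℝ)) n]
  have e1 : ∀ k ∈ range (n+1), c (k+1) * (((n+1).descFactorial (k+1) : ℕ) : ℝ)
      = c (k+1) * ((n.descFactorial (k+1) : ℕ) : ℝ)
        + ((k:ℝ)+1) * c (k+1) * ((n.descFactorial k : ℕ) : ℝ) := by
    intro k _
    rw [descF_add]
    push_cast
    ring
  rw [Finset.sum_congr rfl e1, Finset.sum_add_distrib]
  have e2 : ∑ k ∈ range (n+1), c (k+1) * ((n.descFactorial (k+1) : ℕ) : ℝ)
      = ∑ k ∈ range n, c (k+1) * ((n.descFactorial (k+1) : ℕ) : ℝ) := by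
    rw [Finset.sum_range_succ]
    simp [Nat.descFactorial_eq_zero_iff_lt]
  rw [e2]
  simp only [Nat.descFactorial_zero, Nat.cast_one]
  ring

lemma haltR (N : ℕ) :
    ∑ s ∈ range (N+1), (-1:ℝ)^s * (N.choose s : ℝ) = if N = 0 then 1 else 0 := by
  have := @Int.alternating_sum_range_choose N
  have h2 : ((∑ s ∈ range (N+1), ((-1)^s * N.choose s : ℤ) : ℤ) : ℝ)
      = ((if N = 0 then 1 else 0 : ℤ) : ℝ) := by rw [this]
  push_cast at h2
  exact h2

lemma keyB (l i : ℕ) :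
    ∑ j ∈ range (l+1), (-1:ℝ)^l * (-1:ℝ)^j * (l.choose j : ℝ) * (j.descFactorial i : ℝ)
      = if i = l then (Nat.factorial l : ℝ) else 0 := by
  rcases le_or_gt i l with hil | hil
  · have hsub : ∑ j ∈ range (l+1), (-1:ℝ)^l * (-1:ℝ)^j * (l.choose j : ℝ) * (j.descFactorial i : ℝ)
        = ∑ j ∈ Finset.Ico i (l+1), (-1:ℝ)^l * (-1:ℝ)^j * (l.choose j : ℝ) * (j.descFactorial i : ℝ) := by
      refine (Finset.sum_subset ?_ ?_).symm
      · intro j hj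
        simp only [Finset.mem_Ico, Finset.mem_range] at hj ⊢
        omega
      · intro j hj hj2
        simp only [Finset.mem_Ico, Finset.mem_range] at hj hj2
        have : j < i := by omega
        rw [Nat.descFactorial_eq_zero_iff_lt.2 this]
        simp
    rw [hsub, Finset.sum_Ico_eq_sum_range]
    have hix : l + 1 - i = (l - i) + 1 := by omega
    rw [hix]
    have e1 : ∀ s ∈ range ((l-i)+1),
        (-1:ℝ)^l * (-1:ℝ)^(i+s) * (l.choose (i+s) : ℝ) * ((i+s).descFactorial i : ℝ)
        = ((-1:ℝ)^l * (-1:ℝ)^i * (l.choose i : ℝ) * (Nat.factorial i : ℝ)) *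
            ((-1:ℝ)^s * ((l-i).choose s : ℝ)) := by
      intro s hs
      simp only [Finset.mem_range] at hs
      have hsl : i + s ≤ l := by omega
      have hmul := Nat.choose_mul (n := l) (Nat.le_add_right i s)
      have : (i+s) - i = s := by omega
      rw [this] at hmul
      rw [Nat.descFactorial_eq_factorial_mul_choose]
      have hc : (l.choose (i+s) : ℝ) * ((i+s).choose i : ℝ) = (l.choose i : ℝ) * ((l-i).choose s : ℝ) := by
        exact_mod_cast congrArg (fun x : ℕ => (x:ℝ)) hmul
      rw [pow_add]
      push_cast
      linear_combination ((-1:ℝ)^l*(-1:ℝ)^i*(-1:ℝ)^s*(Nat.factorial i:ℝ)) * hc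
    rw [Finset.sum_congr rfl e1, ← Finset.mul_sum, haltR (l-i)]
    rcases eq_or_lt_of_le hil with rfl | hlt
    · rw [if_pos rfl]
      simp only [Nat.sub_self, Nat.choose_self, Nat.cast_one, if_pos rfl]
      rw [← pow_add, Even.neg_one_pow ⟨i, rfl⟩]
      simp
    · rw [if_neg (by omega), if_neg (by omega)]
      ring
  · rw [if_neg (by omega)]
    apply Finset.sum_eq_zero
    intro j hj
    simp only [Finset.mem_range] at hj
    rw [Nat.descFactorial_eq_zero_iff_lt.2 (by omega)]
    simp



/-- The discrete Hermite equation: the lattice polynomial built from the coefficients of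
the m-th probabilist Hermite polynomial is an exact solution of the nonlocal recurrence
representing y'' − t·y' + m·y = 0 on the integer lattice. -/
theorem discrete_hermite_equation (m : ℕ) (h : ℕ → ℝ)
    (hh : ∀ k : ℕ, h k = ((Polynomial.hermite m).coeff k : ℝ))
    (z : ℕ → ℝ)
    (hz : ∀ n : ℕ, z n = ∑ k ∈ Finset.range (n + 1), h k * (Nat.descFactorial n k : ℝ)) :
    ∀ n : ℕ,
      z (n + 2) - 2 * z (n + 1) + z n -
        (∑ k ∈ Finset.range (n + 1), ∑ j ∈ Finset.range k,
          (-1 : ℝ) ^ (k - 1 - j) *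
            ((Nat.factorial n : ℝ) /
              ((Nat.factorial j : ℝ) * (Nat.factorial (k - 1 - j) : ℝ) *
                (Nat.factorial (n - k) : ℝ))) * (z (j + 1) - z j))
        + (m : ℝ) * z n = 0 := by
  intro n
  have hdz : ∀ p : ℕ, z (p+1) - z p
      = ∑ k ∈ range (p+1), ((k:ℝ)+1) * h (k+1) * (p.descFactorial k : ℝ) := by
    intro p
    rw [hz (p+1), hz p]
    exact Zdiff h p
  have hddz : z (n + 2) - 2 * z (n + 1) + z n
      = ∑ k ∈ range (n+1), ((k:ℝ)+2)*((k:ℝ)+1) * h (k+2) * (n.descFactorial k : ℝ) := by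
    have e : (∑ k ∈ range (n+2), ((k:ℝ)+1) * h (k+1) * (((n+1).descFactorial k : ℕ) : ℝ))
        - ∑ k ∈ range (n+1), ((k:ℝ)+1) * h (k+1) * ((n.descFactorial k : ℕ) : ℝ)
        = ∑ k ∈ range (n+1), ((k:ℝ)+1) * (((((k+1):ℕ):ℝ)+1) * h (k+1+1)) * ((n.descFactorial k : ℕ) : ℝ) :=
      Zdiff (fun k => ((k:ℝ)+1) * h (k+1)) n
    have e1 := hdz (n+1)
    have e2 := hdz n
    have e0 : z (n + 2) - 2 * z (n + 1) + z n = (z (n+1+1) - z (n+1)) - (z (n+1) - z n) := by ring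
    rw [e0, e1, e2, e]
    apply Finset.sum_congr rfl
    intro k _
    push_cast
    ring
  -- the nonlocal (t·y') term
  have hT : (∑ k ∈ Finset.range (n + 1), ∑ j ∈ Finset.range k,
        (-1 : ℝ) ^ (k - 1 - j) *
          ((Nat.factorial n : ℝ) /
            ((Nat.factorial j : ℝ) * (Nat.factorial (k - 1 - j) : ℝ) *
              (Nat.factorial (n - k) : ℝ))) * (z (j + 1) - z j))
      = ∑ k ∈ range (n+1), (k:ℝ) * h k * (n.descFactorial k : ℝ) := by
    rw [Finset.sum_range_succ' _ n]
    simp only [Finset.range_zero, Finset.sum_empty, add_zero, Nat.add_sub_cancel]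
    have hstep : ∀ l ∈ range n,
        (∑ j ∈ Finset.range (l+1), (-1 : ℝ) ^ (l - j) *
          ((Nat.factorial n : ℝ) /
            ((Nat.factorial j : ℝ) * (Nat.factorial (l - j) : ℝ) *
              (Nat.factorial (n - (l+1)) : ℝ))) * (z (j + 1) - z j))
        = ((l:ℝ)+1) * h (l+1) * (n.descFactorial (l+1) : ℝ) := by
      intro l hl
      simp only [Finset.mem_range] at hl
      have hln : l + 1 ≤ n := hl
      -- rewrite each term
      have hterm : ∀ j ∈ range (l+1),
          (-1 : ℝ) ^ (l - j) *
            ((Nat.factorial n : ℝ) /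
              ((Nat.factorial j : ℝ) * (Nat.factorial (l - j) : ℝ) *
                (Nat.factorial (n - (l+1)) : ℝ))) * (z (j + 1) - z j)
          = ∑ i ∈ range (l+1),
              (((i:ℝ)+1) * h (i+1) *
                ((Nat.factorial n : ℝ) / ((Nat.factorial l : ℝ) * (Nat.factorial (n - (l+1)) : ℝ)))) *
              ((-1:ℝ)^l * (-1:ℝ)^j * (l.choose j : ℝ) * (j.descFactorial i : ℝ)) := by
        intro j hj
        simp only [Finset.mem_range] at hj
        have hjl : j ≤ l := by omega
        have hsgn : (-1:ℝ)^(l-j) = (-1:ℝ)^l * (-1:ℝ)^j := by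
          have h2 : (-1:ℝ)^j * (-1:ℝ)^j = 1 := by
            rw [← pow_add]; exact Even.neg_one_pow ⟨j, rfl⟩
          have h3 : (-1:ℝ)^(l-j) * (-1:ℝ)^j = (-1:ℝ)^l := by
            rw [← pow_add]; congr 1; omega
          calc (-1:ℝ)^(l-j) = (-1:ℝ)^(l-j) * ((-1:ℝ)^j * (-1:ℝ)^j) := by rw [h2, mul_one]
            _ = ((-1:ℝ)^(l-j) * (-1:ℝ)^j) * (-1:ℝ)^j := by ring
            _ = (-1:ℝ)^l * (-1:ℝ)^j := by rw [h3]
        have hccfac : (l.choose j : ℝ) * (Nat.factorial j : ℝ) * (Nat.factorial (l-j) : ℝ)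
            = (Nat.factorial l : ℝ) := by
          exact_mod_cast congrArg (fun x : ℕ => (x:ℝ)) (Nat.choose_mul_factorial_mul_factorial hjl)
        have hfac : (Nat.factorial n : ℝ) /
              ((Nat.factorial j : ℝ) * (Nat.factorial (l - j) : ℝ) *
                (Nat.factorial (n - (l+1)) : ℝ))
            = (l.choose j : ℝ) *
              ((Nat.factorial n : ℝ) / ((Nat.factorial l : ℝ) * (Nat.factorial (n - (l+1)) : ℝ))) := by
          rw [← hccfac]
          have p1 : (Nat.factorial j : ℝ) ≠ 0 := Nat.cast_ne_zero.2 (Nat.factorial_ne_zero j)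
          have p2 : (Nat.factorial (l-j) : ℝ) ≠ 0 := Nat.cast_ne_zero.2 (Nat.factorial_ne_zero _)
          have p3 : (Nat.factorial (n-(l+1)) : ℝ) ≠ 0 := Nat.cast_ne_zero.2 (Nat.factorial_ne_zero _)
          have p4 : (l.choose j : ℝ) ≠ 0 :=
            Nat.cast_ne_zero.2 (Nat.choose_pos hjl).ne'
          field_simp
        have hzz : z (j+1) - z j
            = ∑ i ∈ range (l+1), ((i:ℝ)+1) * h (i+1) * (j.descFactorial i : ℝ) := by
          rw [hdz j]
          refine Finset.sum_subset (Finset.range_subset_range.2 (by omega)) ?_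
          intro i hi hi2
          simp only [Finset.mem_range] at hi hi2
          rw [Nat.descFactorial_eq_zero_iff_lt.2 (by omega)]
          simp
        rw [hsgn, hfac, hzz, Finset.mul_sum]
        apply Finset.sum_congr rfl
        intro i _
        ring
      rw [Finset.sum_congr rfl hterm, Finset.sum_comm]
      have hinner : ∀ i ∈ range (l+1),
          (∑ j ∈ range (l+1),
            (((i:ℝ)+1) * h (i+1) *
              ((Nat.factorial n : ℝ) / ((Nat.factorial l : ℝ) * (Nat.factorial (n - (l+1)) : ℝ)))) *
            ((-1:ℝ)^l * (-1:ℝ)^j * (l.choose j : ℝ) * (j.descFactorial i : ℝ)))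
          = (((i:ℝ)+1) * h (i+1) *
              ((Nat.factorial n : ℝ) / ((Nat.factorial l : ℝ) * (Nat.factorial (n - (l+1)) : ℝ)))) *
            (if i = l then (Nat.factorial l : ℝ) else 0) := by
        intro i _
        rw [← Finset.mul_sum, keyB l i]
      rw [Finset.sum_congr rfl hinner]
      rw [Finset.sum_eq_single l]
      · rw [if_pos rfl]
        have hdesc : ((n.descFactorial (l+1) : ℕ):ℝ)
            = (Nat.factorial n : ℝ) / ((Nat.factorial (n-(l+1)) : ℝ)) := by
          have h1 : n.descFactorial (l+1) * Nat.factorial (n-(l+1)) = Nat.factorial n := by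
            rw [Nat.descFactorial_eq_factorial_mul_choose, mul_comm (Nat.factorial (l+1)) _]
            exact Nat.choose_mul_factorial_mul_factorial hln
          have p3 : (Nat.factorial (n-(l+1)) : ℝ) ≠ 0 := Nat.cast_ne_zero.2 (Nat.factorial_ne_zero _)
          field_simp
          exact_mod_cast h1
        rw [hdesc]
        have pl : (Nat.factorial l : ℝ) ≠ 0 := Nat.cast_ne_zero.2 (Nat.factorial_ne_zero _)
        have p3 : (Nat.factorial (n-(l+1)) : ℝ) ≠ 0 := Nat.cast_ne_zero.2 (Nat.factorial_ne_zero _)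
        field_simp
      · intro i _ hil
        rw [if_neg hil, mul_zero]
      · intro hcon
        exact absurd (Finset.self_mem_range_succ l) hcon
    rw [Finset.sum_congr rfl hstep,
      Finset.sum_range_succ' (fun k => (k:ℝ) * h k * ((n.descFactorial k : ℕ) : ℝ)) n]
    push_cast
    simp
  rw [hddz, hT, hz n, Finset.mul_sum, ← Finset.sum_sub_distrib, ← Finset.sum_add_distrib]
  apply Finset.sum_eq_zero
  intro k _
  have hr := hermite_recR m k
  rw [hh k, hh (k+2)]
  linear_combination ((n.descFactorial k : ℕ) : ℝ) * hr
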